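/- arXiv:1612.05910 — 2 statements merged into one kernel-verified Lean document; each statement's English description precedes it below -/
import Mathlib

section
/- (Lemma 1 of the paper, case j = 1.) Let v, w > 0, n_cr > 0 and fix a linearization point n̂_11 with 0 ≤ n̂_11 ≤ n_cr. Define γ_10 = (w+v)·n̂_11, γ_11 = v − (w+v)·n̂_11/n_cr, γ_12 = −(w+v)·n̂_11/n_cr, and the approximation Ō_11(n_11, n_12) = min(v·n_11, γ_10 + γ_11·n_11 + γ_12·n_12). Let O_11(n_11, n_12) = (n_11/(n_11+n_12))·min(v·(n_11+n_12), (w+v)·n_cr − w·(n_11+n_12)). Then for all n_11, n_12 ≥ 0 with 0 < n_11 + n_12 ≤ n_cr, we have Ō_11(n_11, n_12) = O_11(n_11, n_12). -/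
theorem lemma1_case_j1 (v w ncr : ℝ) (hv : 0 < v) (hw : 0 < w) (hncr : 0 < ncr)
    (nhat11 : ℝ) (hhat0 : 0 ≤ nhat11) (hhat1 : nhat11 ≤ ncr)
    (γ10 γ11 γ12 : ℝ)
    (hγ10 : γ10 = (w + v) * nhat11)
    (hγ11 : γ11 = v - (w + v) * nhat11 / ncr)
    (hγ12 : γ12 = -((w + v) * nhat11 / ncr))
    (Obar O : ℝ → ℝ → ℝ)
    (hObar : ∀ n11 n12, Obar n11 n12 = min (v * n11) (γ10 + γ11 * n11 + γ12 * n12))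
    (hO : ∀ n11 n12, O n11 n12 =
      (n11 / (n11 + n12)) * min (v * (n11 + n12)) ((w + v) * ncr - w * (n11 + n12))) :
    ∀ n11 n12 : ℝ, 0 ≤ n11 → 0 ≤ n12 → 0 < n11 + n12 → n11 + n12 ≤ ncr →
      Obar n11 n12 = O n11 n12 := by
  intro n11 n12 h11 h12 hpos hle
  rw [hObar, hO]
  have hmin : min (v * (n11 + n12)) ((w + v) * ncr - w * (n11 + n12)) = v * (n11 + n12) :=
    min_eq_left (by nlinarith)
  rw [hmin]
  have hO' : n11 / (n11 + n12) * (v * (n11 + n12)) = v * n11 := by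
    field_simp
  rw [hO']
  apply min_eq_left
  subst hγ10 hγ11 hγ12
  have key : 0 ≤ (w + v) * nhat11 * (ncr - (n11 + n12)) := by
    apply mul_nonneg (mul_nonneg (by linarith) hhat0) (by linarith)
  have h : v * n11 * ncr ≤ ((w + v) * nhat11 + (v - (w + v) * nhat11 / ncr) * n11 +
      -((w + v) * nhat11 / ncr) * n12) * ncr := by
    field_simp
    nlinarith
  exact le_of_mul_le_mul_right h hncr
end

section
/- (Lemma 1 of the paper, case j = 2.) Let v, w > 0, n_cr > 0 and fix 0 ≤ n̂_12 ≤ n_cr. Define γ_20 = (w+v)·n̂_12, γ_21 = −(w+v)·n̂_12/n_cr, γ_22 = v − (w+v)·n̂_12/n_cr, and Ō_12(n_11, n_12) = min(v·n_12, γ_20 + γ_21·n_11 + γ_22·n_12). Let O_12(n_11, n_12) = (n_12/(n_11+n_12))·min(v·(n_11+n_12), (w+v)·n_cr − w·(n_11+n_12)). Then for all n_11, n_12 ≥ 0 with 0 < n_11 + n_12 ≤ n_cr, Ō_12(n_11, n_12) = O_12(n_11, n_12). -/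
theorem lemma1_case_j2 (v w ncr : ℝ) (hv : 0 < v) (hw : 0 < w) (hncr : 0 < ncr)
    (nhat12 : ℝ) (hhat0 : 0 ≤ nhat12) (hhat1 : nhat12 ≤ ncr)
    (γ20 γ21 γ22 : ℝ)
    (hγ20 : γ20 = (w + v) * nhat12)
    (hγ21 : γ21 = -((w + v) * nhat12 / ncr))
    (hγ22 : γ22 = v - (w + v) * nhat12 / ncr)
    (Obar O : ℝ → ℝ → ℝ)
    (hObar : ∀ n11 n12, Obar n11 n12 = min (v * n12) (γ20 + γ21 * n11 + γ22 * n12))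
    (hO : ∀ n11 n12, O n11 n12 =
      (n12 / (n11 + n12)) * min (v * (n11 + n12)) ((w + v) * ncr - w * (n11 + n12))) :
    ∀ n11 n12 : ℝ, 0 ≤ n11 → 0 ≤ n12 → 0 < n11 + n12 → n11 + n12 ≤ ncr →
      Obar n11 n12 = O n11 n12 := by
  intro n11 n12 h11 h12 hs hsn
  rw [hObar, hO, hγ20, hγ21, hγ22]
  have hmin : min (v * (n11 + n12)) ((w + v) * ncr - w * (n11 + n12)) = v * (n11 + n12) := by
    apply min_eq_left; nlinarith
  rw [hmin]
  have hO' : n12 / (n11 + n12) * (v * (n11 + n12)) = v * n12 := by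
    field_simp
  rw [hO']
  apply min_eq_left
  have hdiv : (w + v) * nhat12 / ncr * (n11 + n12) ≤ (w + v) * nhat12 := by
    rw [div_mul_eq_mul_div, div_le_iff₀ hncr]
    nlinarith [mul_nonneg (mul_nonneg (by linarith : (0:ℝ) ≤ w + v) hhat0) (by linarith : (0:ℝ) ≤ ncr - (n11+n12))]
  have : (w + v) * nhat12 / ncr * (n11 + n12) = (w + v) * nhat12 / ncr * n11 + (w + v) * nhat12 / ncr * n12 := by ring
  nlinarith [this]
end
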